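/- For any algorithm in the nested-box model, E[A_i v_i - Σ_{ℓ=1}^d I_i^(ℓ) c_i^(ℓ)] ≤ E[A_i κ_i^(1)], with equality if and only if the algorithm is non-exposed on basket i (i.e. almost surely, for every ℓ, if box ℓ is the last opened and basket i is unclaimed, then κ_i^(ℓ+1) ≤ γ_i^(ℓ)). -/

import Mathlib

open MeasureTheory Filter

private lemma telescope_Icc (f : ℕ → ℝ) (d : ℕ) :
    ∑ ℓ ∈ Finset.Icc 1 d, (f (ℓ + 1) - f ℓ) = f (d + 1) - f 1 := by
  induction d with
  | zero => simp
  | succ n ih => rw [Finset.sum_Icc_succ_top (by omega), ih]; ring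

/-- The nested-box amortization lemma: for any algorithm (inspection indicators
`I (d+1) ≤ I d ≤ ⋯ ≤ I 1` with `I ℓ` decided before observing signal `s^(ℓ)`, i.e.
`𝒢 ℓ`-measurable, and `A = I (d+1)` the claiming indicator), the expected welfare
contribution of the basket satisfies `E[A·v - ∑ I ℓ · c ℓ] ≤ E[A · κ 1]`, with
equality iff the algorithm is non-exposed: almost surely, for every `ℓ`, if box `ℓ`
is the last advanced stage (`I ℓ = 1`, `I (ℓ+1) = 0`) then `κ (ℓ+1) ≤ γ ℓ`. -/
theorem nested_key_lemma
    {Ω : Type*} [m0 : MeasurableSpace Ω] (μ : Measure Ω) [IsProbabilityMeasure μ]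
    (d : ℕ) (𝒢 : ℕ → MeasurableSpace Ω) (h𝒢 : ∀ ℓ, 𝒢 ℓ ≤ m0)
    (σidx κ γ : ℕ → Ω → ℝ) (v A : Ω → ℝ) (I : ℕ → Ω → ℝ) (c : ℕ → ℝ)
    (hκtop : κ (d + 1) = v)
    (hκ : ∀ ℓ, 1 ≤ ℓ → ℓ ≤ d → κ ℓ = fun ω => min (σidx ℓ ω) (κ (ℓ + 1) ω))
    (hγ1 : γ 1 = σidx 1)
    (hγ : ∀ ℓ, 1 ≤ ℓ → ℓ + 1 ≤ d → γ (ℓ + 1) = fun ω => min (γ ℓ ω) (σidx (ℓ + 1) ω))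
    (hσmeas : ∀ ℓ, Measurable (σidx ℓ)) (hκmeas : ∀ ℓ, Measurable (κ ℓ))
    (hσ : ∀ ℓ, 1 ≤ ℓ → ℓ ≤ d →
      (μ[(fun ω => max (κ (ℓ + 1) ω - σidx ℓ ω) 0) | 𝒢 ℓ]) =ᵐ[μ] fun _ => c ℓ)
    (hImeas : ∀ ℓ, 1 ≤ ℓ → ℓ ≤ d → Measurable[𝒢 ℓ] (I ℓ))
    (hI01 : ∀ ℓ ω, I ℓ ω = 0 ∨ I ℓ ω = 1)
    (hchain : ∀ ℓ, 1 ≤ ℓ → ℓ ≤ d → ∀ ω, I (ℓ + 1) ω ≤ I ℓ ω)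
    (hItop : I (d + 1) = A)
    (hAmeas : Measurable A)
    (hvint : Integrable v μ)
    (hκint : ∀ ℓ, 1 ≤ ℓ → ℓ ≤ d + 1 → Integrable (κ ℓ) μ) :
    (∫ ω, (A ω * v ω - ∑ ℓ ∈ Finset.Icc 1 d, I ℓ ω * c ℓ) ∂μ ≤
        ∫ ω, A ω * κ 1 ω ∂μ) ∧
    ((∫ ω, (A ω * v ω - ∑ ℓ ∈ Finset.Icc 1 d, I ℓ ω * c ℓ) ∂μ =
        ∫ ω, A ω * κ 1 ω ∂μ) ↔
      ∀ ℓ, 1 ≤ ℓ → ℓ ≤ d →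
        μ {ω | I ℓ ω = 1 ∧ I (ℓ + 1) ω = 0 ∧ γ ℓ ω < κ (ℓ + 1) ω} = 0) := by
  classical
  set X : ℕ → Ω → ℝ := fun ℓ ω => κ (ℓ + 1) ω - κ ℓ ω with hXdef
  have hXmax : ∀ ℓ, 1 ≤ ℓ → ℓ ≤ d → ∀ ω,
      X ℓ ω = max (κ (ℓ + 1) ω - σidx ℓ ω) 0 := by
    intro ℓ h1 h2 ω
    simp only [hXdef, hκ ℓ h1 h2]
    rcases le_total (σidx ℓ ω) (κ (ℓ + 1) ω) with h | h
    · rw [min_eq_left h, max_eq_left (by linarith)]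
    · rw [min_eq_right h, max_eq_right (by linarith), sub_self]
  have hXnn : ∀ ℓ, 1 ≤ ℓ → ℓ ≤ d → ∀ ω, 0 ≤ X ℓ ω := by
    intro ℓ h1 h2 ω
    rw [hXmax ℓ h1 h2 ω]; exact le_max_right _ _
  have hA01 : ∀ ω, A ω = 0 ∨ A ω = 1 := by
    intro ω; rw [← hItop]; exact hI01 _ ω
  -- I is antitone in the stage index
  have hIanti : ∀ a b, 1 ≤ a → a ≤ b → b ≤ d + 1 → ∀ ω, I b ω ≤ I a ω := by
    intro a b h1 hab
    induction hab with
    | refl => intro _ ω; exact le_rfl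
    | @step m hm ih =>
      intro hbd ω
      exact le_trans (hchain m (le_trans h1 hm) (by omega) ω) (ih (by omega) ω)
  have hALE : ∀ ℓ, 1 ≤ ℓ → ℓ ≤ d + 1 → ∀ ω, A ω ≤ I ℓ ω := by
    intro ℓ h1 h2 ω
    rw [← hItop]; exact hIanti ℓ (d + 1) h1 h2 le_rfl ω
  -- κ is monotone in the stage index
  have hκmono : ∀ a b, 1 ≤ a → a ≤ b → b ≤ d + 1 → ∀ ω, κ a ω ≤ κ b ω := by
    intro a b h1 hab
    induction hab with
    | refl => intro _ ω; exact le_rfl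
    | @step m hm ih =>
      intro hbd ω
      calc κ a ω ≤ κ m ω := ih (by omega) ω
        _ ≤ κ (m + 1) ω := by
          simp only [hκ m (le_trans h1 hm) (by omega)]
          exact min_le_right _ _
  -- γ ≤ σ at each stage
  have hγle : ∀ ℓ, 1 ≤ ℓ → ℓ ≤ d → ∀ ω, γ ℓ ω ≤ σidx ℓ ω := by
    intro ℓ h1 h2 ω
    rcases Nat.lt_or_ge ℓ 2 with h | h
    · have hℓ : ℓ = 1 := by omega
      subst hℓ; rw [hγ1]
    · obtain ⟨m, rfl⟩ : ∃ m, ℓ = m + 1 := ⟨ℓ - 1, by omega⟩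
      simp only [hγ m (by omega) (by omega)]
      exact min_le_right _ _
  -- γ is antitone
  have hγanti : ∀ a b, 1 ≤ a → a ≤ b → b ≤ d → ∀ ω, γ b ω ≤ γ a ω := by
    intro a b h1 hab
    induction hab with
    | refl => intro _ ω; exact le_rfl
    | @step m hm ih =>
      intro hbd ω
      calc γ (m + 1) ω ≤ γ m ω := by
            simp only [hγ m (le_trans h1 hm) (by omega)]
            exact min_le_left _ _
        _ ≤ γ a ω := ih (by omega) ω
  -- key existence lemma
  have hkey : ∀ ℓ', 1 ≤ ℓ' → ℓ' ≤ d → ∀ ω, γ ℓ' ω < κ (ℓ' + 1) ω →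
      ∃ ℓ, 1 ≤ ℓ ∧ ℓ ≤ ℓ' ∧ σidx ℓ ω < κ (ℓ + 1) ω := by
    intro ℓ' h1
    induction ℓ', h1 using Nat.le_induction with
    | base =>
      intro hd0 ω h
      exact ⟨1, le_rfl, le_rfl, by rwa [hγ1] at h⟩
    | succ m hm ih =>
      intro hd0 ω h
      by_cases hc : σidx (m + 1) ω < κ (m + 1 + 1) ω
      · exact ⟨m + 1, by omega, le_rfl, hc⟩
      · push_neg at hc
        have hγeq : γ (m + 1) ω = min (γ m ω) (σidx (m + 1) ω) := by
          simp only [hγ m hm (by omega)]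
        have hκeq : κ (m + 1) ω = κ (m + 1 + 1) ω := by
          simp only [hκ (m + 1) (by omega) (by omega)]
          exact min_eq_right hc
        have hlt : γ m ω < κ (m + 1) ω := by
          rw [hκeq]
          rcases le_total (γ m ω) (σidx (m + 1) ω) with hle | hle
          · rwa [hγeq, min_eq_left hle] at h
          · rw [hγeq, min_eq_right hle] at h
            exact absurd h (not_lt.mpr hc)
        obtain ⟨ℓ, g1, g2, g3⟩ := ih (by omega) ω hlt
        exact ⟨ℓ, g1, by omega, g3⟩
  -- last-stage lemma
  have hlast : ∀ ℓ, 1 ≤ ℓ → ℓ ≤ d → ∀ ω, I ℓ ω = 1 → A ω = 0 →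
      ∃ ℓ', ℓ ≤ ℓ' ∧ ℓ' ≤ d ∧ I ℓ' ω = 1 ∧ I (ℓ' + 1) ω = 0 := by
    have haux : ∀ n ℓ, 1 ≤ ℓ → ℓ + n = d → ∀ ω, I ℓ ω = 1 → A ω = 0 →
        ∃ ℓ', ℓ ≤ ℓ' ∧ ℓ' ≤ d ∧ I ℓ' ω = 1 ∧ I (ℓ' + 1) ω = 0 := by
      intro n
      induction n with
      | zero =>
        intro ℓ h1 h2 ω hI hA
        refine ⟨ℓ, le_rfl, by omega, hI, ?_⟩
        rw [show ℓ + 1 = d + 1 by omega, hItop, hA]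
      | succ m ih =>
        intro ℓ h1 h2 ω hI hA
        rcases hI01 (ℓ + 1) ω with h0 | h1'
        · exact ⟨ℓ, le_rfl, by omega, hI, h0⟩
        · obtain ⟨ℓ', ha, hb, hc', hd'⟩ := ih (ℓ + 1) (by omega) (by omega) ω h1' hA
          exact ⟨ℓ', by omega, hb, hc', hd'⟩
    intro ℓ h1 h2 ω
    exact haux (d - ℓ) ℓ h1 (by omega) ω
  -- the slack process
  set S : Ω → ℝ := fun ω => ∑ ℓ ∈ Finset.Icc 1 d, (I ℓ ω - A ω) * X ℓ ω with hSdef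
  have htermnn : ∀ ℓ ∈ Finset.Icc 1 d, ∀ ω, 0 ≤ (I ℓ ω - A ω) * X ℓ ω := by
    intro ℓ hℓ ω
    rw [Finset.mem_Icc] at hℓ
    exact mul_nonneg (by linarith [hALE ℓ hℓ.1 (by omega) ω]) (hXnn ℓ hℓ.1 hℓ.2 ω)
  have hSnn : ∀ ω, 0 ≤ S ω := fun ω =>
    Finset.sum_nonneg fun ℓ hℓ => htermnn ℓ hℓ ω
  -- pointwise characterization of positivity of S
  have hchar : ∀ ω, S ω ≠ 0 ↔ ∃ ℓ, 1 ≤ ℓ ∧ ℓ ≤ d ∧ I ℓ ω = 1 ∧ I (ℓ + 1) ω = 0 ∧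
      γ ℓ ω < κ (ℓ + 1) ω := by
    intro ω
    constructor
    · intro hne
      have : ∃ ℓ ∈ Finset.Icc 1 d, (I ℓ ω - A ω) * X ℓ ω ≠ 0 := by
        by_contra hw
        push_neg at hw
        exact hne (Finset.sum_eq_zero hw)
      obtain ⟨ℓ, hmem, hterm⟩ := this
      rw [Finset.mem_Icc] at hmem
      obtain ⟨h1, h2⟩ := hmem
      have hXne : X ℓ ω ≠ 0 := fun h => hterm (by rw [h, mul_zero])
      have hIAne : I ℓ ω - A ω ≠ 0 := fun h => hterm (by rw [h, zero_mul])
      have hle := hALE ℓ h1 (by omega) ω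
      have hI1 : I ℓ ω = 1 ∧ A ω = 0 := by
        rcases hI01 ℓ ω with h | h <;> rcases hA01 ω with h' | h'
        · exact absurd (by rw [h, h']; ring) hIAne
        · exact absurd hle (by rw [h, h']; norm_num)
        · exact ⟨h, h'⟩
        · exact absurd (by rw [h, h']; ring) hIAne
      obtain ⟨hI1', hA0⟩ := hI1
      have hσlt : σidx ℓ ω < κ (ℓ + 1) ω := by
        by_contra hge
        push_neg at hge
        exact hXne (by rw [hXmax ℓ h1 h2 ω]; exact max_eq_right (by linarith))
      obtain ⟨ℓ', ha, hb, hc', hd'⟩ := hlast ℓ h1 h2 ω hI1' hA0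
      refine ⟨ℓ', by omega, hb, hc', hd', ?_⟩
      calc γ ℓ' ω ≤ γ ℓ ω := hγanti ℓ ℓ' h1 ha hb ω
        _ ≤ σidx ℓ ω := hγle ℓ h1 h2 ω
        _ < κ (ℓ + 1) ω := hσlt
        _ ≤ κ (ℓ' + 1) ω := hκmono (ℓ + 1) (ℓ' + 1) (by omega) (by omega) (by omega) ω
    · rintro ⟨ℓ, h1, h2, hI1, hI0, hγκ⟩
      obtain ⟨ℓ0, g1, g2, g3⟩ := hkey ℓ h1 h2 ω hγκ
      have hA0 : A ω = 0 := by
        have h := hALE (ℓ + 1) (by omega) (by omega) ω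
        rw [hI0] at h
        rcases hA01 ω with h' | h'
        · exact h'
        · linarith
      have hI0' : I ℓ0 ω = 1 := by
        have h := hIanti ℓ0 ℓ g1 g2 (by omega) ω
        rw [hI1] at h
        rcases hI01 ℓ0 ω with h' | h'
        · linarith
        · exact h'
      have hterm : 0 < (I ℓ0 ω - A ω) * X ℓ0 ω := by
        rw [hI0', hA0, hXmax ℓ0 g1 (by omega) ω]
        simp only [sub_zero, one_mul]
        exact lt_max_iff.mpr (Or.inl (by linarith))
      have hleS : (I ℓ0 ω - A ω) * X ℓ0 ω ≤ S ω :=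
        Finset.single_le_sum (fun i hi => htermnn i hi ω)
          (Finset.mem_Icc.mpr ⟨g1, by omega⟩)
      exact (lt_of_lt_of_le hterm hleS).ne'
  -- integrability facts
  have hImeas0 : ∀ ℓ, 1 ≤ ℓ → ℓ ≤ d → Measurable (I ℓ) := fun ℓ h1 h2 =>
    (hImeas ℓ h1 h2).mono (h𝒢 ℓ) le_rfl
  have hIbound : ∀ ℓ ω, ‖I ℓ ω‖ ≤ 1 := by
    intro ℓ ω; rcases hI01 ℓ ω with h | h <;> simp [h]
  have hAbound : ∀ ω, ‖A ω‖ ≤ 1 := by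
    intro ω; rcases hA01 ω with h | h <;> simp [h]
  have hXint : ∀ ℓ, 1 ≤ ℓ → ℓ ≤ d → Integrable (X ℓ) μ := by
    intro ℓ h1 h2
    simp only [hXdef]
    exact (hκint (ℓ + 1) (by omega) (by omega)).sub (hκint ℓ h1 (by omega))
  have hIint : ∀ ℓ, 1 ≤ ℓ → ℓ ≤ d → Integrable (I ℓ) μ := fun ℓ h1 h2 =>
    (integrable_const (1 : ℝ)).mono' (hImeas0 ℓ h1 h2).aestronglyMeasurable
      (ae_of_all _ fun ω => hIbound ℓ ω)
  have hIXint : ∀ ℓ, 1 ≤ ℓ → ℓ ≤ d → Integrable (fun ω => I ℓ ω * X ℓ ω) μ :=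
    fun ℓ h1 h2 => (hXint ℓ h1 h2).bdd_mul
      (hImeas0 ℓ h1 h2).aestronglyMeasurable (ae_of_all _ (hIbound ℓ))
  have hAXint : ∀ ℓ, 1 ≤ ℓ → ℓ ≤ d → Integrable (fun ω => A ω * X ℓ ω) μ :=
    fun ℓ h1 h2 => (hXint ℓ h1 h2).bdd_mul hAmeas.aestronglyMeasurable (ae_of_all _ hAbound)
  have hIAXint : ∀ ℓ, 1 ≤ ℓ → ℓ ≤ d →
      Integrable (fun ω => (I ℓ ω - A ω) * X ℓ ω) μ := by
    intro ℓ h1 h2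
    have heq : (fun ω => (I ℓ ω - A ω) * X ℓ ω) =
        fun ω => I ℓ ω * X ℓ ω - A ω * X ℓ ω := by funext ω; ring
    rw [heq]
    exact (hIXint ℓ h1 h2).sub (hAXint ℓ h1 h2)
  have hSint : Integrable S μ := by
    simp only [hSdef]
    exact integrable_finset_sum _ fun ℓ hℓ => by
      rw [Finset.mem_Icc] at hℓ; exact hIAXint ℓ hℓ.1 hℓ.2
  -- the amortization step: E[I X] = E[I c]
  have hIc : ∀ ℓ, 1 ≤ ℓ → ℓ ≤ d →
      ∫ ω, I ℓ ω * X ℓ ω ∂μ = ∫ ω, I ℓ ω * c ℓ ∂μ := by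
    intro ℓ h1 h2
    have hsm : StronglyMeasurable[𝒢 ℓ] (I ℓ) := (hImeas ℓ h1 h2).stronglyMeasurable
    have hmul : Integrable (I ℓ * X ℓ) μ := hIXint ℓ h1 h2
    have h1' := condExp_mul_of_stronglyMeasurable_left hsm hmul (hXint ℓ h1 h2)
    have hXc : μ[X ℓ|𝒢 ℓ] =ᵐ[μ] fun _ => c ℓ := by
      have heq : X ℓ = fun ω => max (κ (ℓ + 1) ω - σidx ℓ ω) 0 :=
        funext (hXmax ℓ h1 h2)
      rw [heq]
      exact hσ ℓ h1 h2
    have h2' : μ[I ℓ * X ℓ|𝒢 ℓ] =ᵐ[μ] fun ω => I ℓ ω * c ℓ := by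
      refine h1'.trans ?_
      filter_upwards [hXc] with ω hω
      simp only [Pi.mul_apply, hω]
    calc ∫ ω, I ℓ ω * X ℓ ω ∂μ = ∫ ω, (I ℓ * X ℓ) ω ∂μ := rfl
      _ = ∫ ω, (μ[I ℓ * X ℓ|𝒢 ℓ]) ω ∂μ := (integral_condExp (h𝒢 ℓ)).symm
      _ = ∫ ω, I ℓ ω * c ℓ ∂μ := integral_congr_ae h2'
  -- pointwise decomposition of A·v
  have hAv : (fun ω => A ω * v ω) =
      fun ω => A ω * κ 1 ω + ∑ ℓ ∈ Finset.Icc 1 d, A ω * X ℓ ω := by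
    funext ω
    have ht : ∑ ℓ ∈ Finset.Icc 1 d, A ω * X ℓ ω = A ω * (κ (d + 1) ω - κ 1 ω) := by
      rw [← Finset.mul_sum]
      congr 1
      simp only [hXdef]
      exact telescope_Icc (fun n => κ n ω) d
    rw [ht, ← hκtop]
    ring
  -- integral identities
  have hIcint : ∀ ℓ ∈ Finset.Icc 1 d, Integrable (fun ω => I ℓ ω * c ℓ) μ := by
    intro ℓ hℓ
    rw [Finset.mem_Icc] at hℓ
    exact (hIint ℓ hℓ.1 hℓ.2).mul_const _
  have hsumIcint : Integrable (fun ω => ∑ ℓ ∈ Finset.Icc 1 d, I ℓ ω * c ℓ) μ :=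
    integrable_finset_sum _ hIcint
  have hAvint : Integrable (fun ω => A ω * v ω) μ :=
    hvint.bdd_mul hAmeas.aestronglyMeasurable (ae_of_all _ hAbound)
  have hAκ1int : Integrable (fun ω => A ω * κ 1 ω) μ :=
    (hκint 1 le_rfl (by omega)).bdd_mul hAmeas.aestronglyMeasurable (ae_of_all _ hAbound)
  have e1 : ∫ ω, (A ω * v ω - ∑ ℓ ∈ Finset.Icc 1 d, I ℓ ω * c ℓ) ∂μ =
      ∫ ω, A ω * v ω ∂μ - ∑ ℓ ∈ Finset.Icc 1 d, ∫ ω, I ℓ ω * c ℓ ∂μ := by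
    rw [integral_sub hAvint hsumIcint, integral_finset_sum _ hIcint]
  have e2 : ∫ ω, A ω * v ω ∂μ =
      ∫ ω, A ω * κ 1 ω ∂μ + ∑ ℓ ∈ Finset.Icc 1 d, ∫ ω, A ω * X ℓ ω ∂μ := by
    rw [hAv, integral_add hAκ1int (integrable_finset_sum _ fun ℓ hℓ => by
      rw [Finset.mem_Icc] at hℓ; exact hAXint ℓ hℓ.1 hℓ.2),
      integral_finset_sum _ fun ℓ hℓ => by
      rw [Finset.mem_Icc] at hℓ; exact hAXint ℓ hℓ.1 hℓ.2]
  have e3 : ∫ ω, S ω ∂μ =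
      ∑ ℓ ∈ Finset.Icc 1 d, ∫ ω, (I ℓ ω - A ω) * X ℓ ω ∂μ := by
    simp only [hSdef]
    rw [integral_finset_sum _ fun ℓ hℓ => by
      rw [Finset.mem_Icc] at hℓ; exact hIAXint ℓ hℓ.1 hℓ.2]
  have e4 : ∀ ℓ ∈ Finset.Icc 1 d, ∫ ω, (I ℓ ω - A ω) * X ℓ ω ∂μ =
      ∫ ω, I ℓ ω * c ℓ ∂μ - ∫ ω, A ω * X ℓ ω ∂μ := by
    intro ℓ hℓ
    rw [Finset.mem_Icc] at hℓ
    have heq : (fun ω => (I ℓ ω - A ω) * X ℓ ω) =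
        fun ω => I ℓ ω * X ℓ ω - A ω * X ℓ ω := by funext ω; ring
    rw [show ∫ ω, (I ℓ ω - A ω) * X ℓ ω ∂μ =
        ∫ ω, (I ℓ ω * X ℓ ω - A ω * X ℓ ω) ∂μ from by rw [← heq],
      integral_sub (hIXint ℓ hℓ.1 hℓ.2) (hAXint ℓ hℓ.1 hℓ.2),
      hIc ℓ hℓ.1 hℓ.2]
  have main : ∫ ω, A ω * κ 1 ω ∂μ -
      ∫ ω, (A ω * v ω - ∑ ℓ ∈ Finset.Icc 1 d, I ℓ ω * c ℓ) ∂μ = ∫ ω, S ω ∂μ := by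
    rw [e1, e2, e3, Finset.sum_congr rfl e4, Finset.sum_sub_distrib]
    ring
  have hSpos : 0 ≤ ∫ ω, S ω ∂μ := integral_nonneg hSnn
  refine ⟨by linarith, ?_⟩
  have hae : ∫ ω, S ω ∂μ = 0 ↔ S =ᵐ[μ] 0 :=
    integral_eq_zero_iff_of_nonneg hSnn hSint
  constructor
  · intro h ℓ h1 h2
    have hS0 : S =ᵐ[μ] 0 := hae.mp (by linarith)
    have hnull : μ {ω | ¬ S ω = 0} = 0 := by
      have := hS0
      rw [Filter.EventuallyEq, ae_iff] at this
      simpa using this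
    refine measure_mono_null ?_ hnull
    intro ω hω
    obtain ⟨hI1, hI0, hγκ⟩ := hω
    exact (hchar ω).mpr ⟨ℓ, h1, h2, hI1, hI0, hγκ⟩
  · intro hb
    set T : ℕ → Set Ω := fun ℓ =>
      if 1 ≤ ℓ ∧ ℓ ≤ d then
        {ω | I ℓ ω = 1 ∧ I (ℓ + 1) ω = 0 ∧ γ ℓ ω < κ (ℓ + 1) ω} else ∅ with hTdef
    have hTnull : ∀ ℓ, μ (T ℓ) = 0 := by
      intro ℓ
      by_cases h : 1 ≤ ℓ ∧ ℓ ≤ d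
      · simp only [hTdef, if_pos h]; exact hb ℓ h.1 h.2
      · simp [hTdef, if_neg h]
    have hnull : μ {ω | ¬ S ω = 0} = 0 := by
      refine measure_mono_null ?_ (measure_iUnion_null hTnull)
      intro ω hω
      obtain ⟨ℓ, h1, h2, ha, hbb, hcc⟩ := (hchar ω).mp hω
      refine Set.mem_iUnion.mpr ⟨ℓ, ?_⟩
      simp only [hTdef, if_pos (show 1 ≤ ℓ ∧ ℓ ≤ d from ⟨h1, h2⟩)]
      exact ⟨ha, hbb, hcc⟩
    have hS0 : S =ᵐ[μ] 0 := by
      rw [Filter.EventuallyEq, ae_iff]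
      simpa using hnull
    have : ∫ ω, S ω ∂μ = 0 := hae.mpr hS0
    linarith
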